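/- Let E be a finite set and Q an E×E matrix with ‖Q‖ < 1 such that I − Q is invertible and a determinantal probability measure P^Q with kernel Q exists. Setting J := Q(I−Q)^{-1}, for every A ⊆ E we have P^Q[𝔄 = A] = det(I−Q) · det(J↾A). -/

import Mathlib

open Matrix Finset

section aux
variable {E : Type*} [Fintype E] [DecidableEq E]

lemma det_of_single_rows (S : Finset E) (M : Matrix E E ℝ)
    (h : ∀ i ∉ S, M i = Pi.single i 1) :
    M.det = (M.submatrix (fun a : S => (a : E)) (fun a : S => (a : E))).det := by
  rw [← Matrix.det_submatrix_equiv_self (Equiv.sumCompl (· ∈ S)) M]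
  have hM : M.submatrix (Equiv.sumCompl (· ∈ S)) (Equiv.sumCompl (· ∈ S)) = Matrix.fromBlocks
      (M.submatrix (fun a : S => (a : E)) (fun a : S => (a : E)))
      (M.submatrix (fun a : S => (a : E)) (fun a : {x // ¬ x ∈ S} => (a : E))) 0 1 := by
    ext i j
    cases i with
    | inl i =>
      cases j with
      | inl j => simp [Matrix.fromBlocks]
      | inr j => simp [Matrix.fromBlocks]
    | inr i =>
      cases j with
      | inl j =>
        have hij : (j : E) ≠ (i : E) := fun hh => i.2 (hh ▸ j.2)
        simp [h i i.2, Pi.single_apply, hij]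
      | inr j =>
        have h2 : M (i : E) (j : E) = if (i : E) = (j : E) then 1 else 0 := by
          rw [h i i.2]; simp [Pi.single_apply, eq_comm]
        simp [h2, Matrix.one_apply, Subtype.ext_iff]
  rw [hM, Matrix.det_fromBlocks_zero₂₁, Matrix.det_one, mul_one]

lemma det_add_diagonal (N : Matrix E E ℝ) (c : E → ℝ) :
    (N + Matrix.diagonal c).det
      = ∑ S : Finset E, (∏ i ∈ Sᶜ, c i) *
          ((N.submatrix (fun a : S => (a : E)) (fun a : S => (a : E))).det) := by
  have hD : ∀ i, (Matrix.diagonal c : Matrix E E ℝ) i = c i • (Pi.single i 1 : E → ℝ) := by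
    intro i
    funext j
    simp [Matrix.diagonal_apply, Pi.single_apply, eq_comm, mul_ite]
  have key : (N + Matrix.diagonal c).det
      = (Matrix.detRowAlternating : (E → ℝ) [⋀^E]→ₗ[ℝ] ℝ).toMultilinearMap
          ((fun i => N i) + (fun i => Matrix.diagonal c i)) := rfl
  rw [key, MultilinearMap.map_add_univ]
  refine Finset.sum_congr rfl fun S _ => ?_
  set m : E → E → ℝ := Sᶜ.piecewise (fun i => (Pi.single i 1 : E → ℝ)) (fun i => N i) with hm
  have hpw : (S.piecewise (fun i => N i) (fun i => Matrix.diagonal c i))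
      = Sᶜ.piecewise (fun i => c i • m i) m := by
    funext i
    by_cases hi : i ∈ S
    · have hi' : i ∉ Sᶜ := by simp [hi]
      rw [Finset.piecewise_eq_of_mem _ _ _ hi, Finset.piecewise_eq_of_notMem _ _ _ hi', hm,
        Finset.piecewise_eq_of_notMem _ _ _ hi']
    · have hi' : i ∈ Sᶜ := by simp [hi]
      rw [Finset.piecewise_eq_of_notMem _ _ _ hi, Finset.piecewise_eq_of_mem _ _ _ hi', hm,
        Finset.piecewise_eq_of_mem _ _ _ hi']
      exact hD i
  rw [hpw, MultilinearMap.map_piecewise_smul]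
  have hmrows : ∀ i ∉ S, (Matrix.of m) i = Pi.single i 1 := by
    intro i hi
    show m i = _
    rw [hm, Finset.piecewise_eq_of_mem _ _ _ (Finset.mem_compl.mpr hi)]
  have hsub : (Matrix.of m).submatrix (fun a : S => (a : E)) (fun a : S => (a : E))
      = N.submatrix (fun a : S => (a : E)) (fun a : S => (a : E)) := by
    ext i j
    have : m (i : E) = N (i : E) := by
      rw [hm, Finset.piecewise_eq_of_notMem _ _ _ (by simp [i.2])]
    simp [Matrix.submatrix_apply, this]
  have hdet : (Matrix.detRowAlternating : (E → ℝ) [⋀^E]→ₗ[ℝ] ℝ).toMultilinearMap m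
      = ((Matrix.of m).submatrix (fun a : S => (a : E)) (fun a : S => (a : E))).det :=
    det_of_single_rows S (Matrix.of m) hmrows
  rw [hdet, hsub, smul_eq_mul]

lemma sum_sign_interval (A C : Finset E) :
    ∑ B ∈ univ.filter (fun B => A ⊆ B ∧ B ⊆ C), (-1 : ℝ) ^ (B.card - A.card)
      = if C = A then 1 else 0 := by
  by_cases hAC : A ⊆ C
  · have hbij : ∑ B ∈ univ.filter (fun B => A ⊆ B ∧ B ⊆ C), (-1 : ℝ) ^ (B.card - A.card)
        = ∑ D ∈ (C \ A).powerset, (-1 : ℝ) ^ D.card := by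
      refine Finset.sum_nbij' (fun B => B \ A) (fun D => A ∪ D) ?_ ?_ ?_ ?_ ?_
      · intro B hB
        simp only [Finset.mem_filter, Finset.mem_univ, true_and] at hB
        exact Finset.mem_powerset.mpr (Finset.sdiff_subset_sdiff hB.2 (le_refl A))
      · intro D hD
        simp only [Finset.mem_powerset] at hD
        simp only [Finset.mem_filter, Finset.mem_univ, true_and]
        exact ⟨Finset.subset_union_left, Finset.union_subset hAC
          (hD.trans (Finset.sdiff_subset))⟩
      · intro B hB
        simp only [Finset.mem_filter, Finset.mem_univ, true_and] at hB
        exact Finset.union_sdiff_of_subset hB.1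
      · intro D hD
        simp only [Finset.mem_powerset] at hD
        have : Disjoint A D := Finset.disjoint_of_subset_right hD Finset.disjoint_sdiff
        exact Finset.union_sdiff_cancel_left this
      · intro B hB
        simp only [Finset.mem_filter, Finset.mem_univ, true_and] at hB
        rw [Finset.card_sdiff_of_subset hB.1]
    rw [hbij]
    have := Finset.sum_powerset_neg_one_pow_card (x := C \ A)
    have hcast : ∑ D ∈ (C \ A).powerset, (-1 : ℝ) ^ D.card
        = ((∑ D ∈ (C \ A).powerset, (-1 : ℤ) ^ D.card : ℤ) : ℝ) := by
      push_cast; ring_nf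
    rw [hcast, this]
    by_cases h : C = A
    · simp [h]
    · have : C \ A ≠ ∅ := by
        rw [Ne, Finset.sdiff_eq_empty_iff_subset]
        intro h2
        exact h (Finset.Subset.antisymm h2 hAC)
      simp [this, h]
  · have h1 : univ.filter (fun B => A ⊆ B ∧ B ⊆ C) = ∅ := by
      rw [Finset.filter_eq_empty_iff]
      rintro B - ⟨h2, h3⟩
      exact hAC (h2.trans h3)
    have h2 : C ≠ A := fun h => hAC (h ▸ le_refl C)
    simp [h1, h2]

lemma mobius_inv (p : Finset E → ℝ) (f : Finset E → ℝ)
    (hf : ∀ A, f A = ∑ B ∈ univ.filter (fun B => A ⊆ B), p B) (A : Finset E) :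
    p A = ∑ B ∈ univ.filter (fun B => A ⊆ B), (-1 : ℝ) ^ (B.card - A.card) * f B := by
  have key : ∑ B ∈ univ.filter (fun B => A ⊆ B), (-1 : ℝ) ^ (B.card - A.card) * f B
      = ∑ C : Finset E,
          (∑ B ∈ univ.filter (fun B => A ⊆ B ∧ B ⊆ C), (-1 : ℝ) ^ (B.card - A.card)) * p C := by
    simp only [hf, Finset.sum_filter, Finset.mul_sum, Finset.sum_mul, ite_mul, zero_mul,
      mul_ite, mul_zero]
    rw [Finset.sum_comm]
    refine Finset.sum_congr rfl fun C _ => ?_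
    by_cases h1 : A ⊆ C <;> simp [h1]
  rw [key]
  simp only [sum_sign_interval, ite_mul, one_mul, zero_mul]
  simp

end aux

/-- If `Q` is a symmetric positive-semidefinite matrix with `I − Q` positive definite
(all eigenvalues in `[0,1)`), and `P^Q` is determinantal with kernel `Q`, then with
`J := Q(I−Q)⁻¹` we have `P^Q[𝔄 = A] = det(I−Q) · det(J↾A)` for every `A ⊆ E`. -/
theorem stmt6 {E : Type*} [Fintype E] [DecidableEq E] (Q : Matrix E E ℝ)
    (hQ : Q.PosSemidef) (hIQ : (1 - Q).PosDef)
    (p : Finset E → ℝ)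
    (h0 : ∀ B, 0 ≤ p B) (h1 : ∑ B : Finset E, p B = 1)
    (hd : ∀ A : Finset E, ∑ B ∈ Finset.univ.filter (fun B => A ⊆ B), p B
      = (Q.submatrix (fun a : A => (a : E)) (fun a : A => (a : E))).det)
    (A : Finset E) :
    p A = (1 - Q).det *
        ((Q * (1 - Q)⁻¹).submatrix (fun a : A => (a : E)) (fun a : A => (a : E))).det := by
  classical
  set R : Matrix E E ℝ := 1 - Q with hRdef
  have hRu : IsUnit R.det := hIQ.det_pos.ne'.isUnit
  set D : Matrix E E ℝ := Matrix.diagonal (fun i => if i ∈ A then (1:ℝ) else 0) with hDdef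
  set c : E → ℝ := fun i => if i ∈ A then 0 else 1 with hcdef
  have hsq : ((-1 : ℝ) ^ A.card) * ((-1 : ℝ) ^ A.card) = 1 := by
    rw [← pow_add, ← two_mul, pow_mul]; norm_num
  -- Step 1 : Möbius inversion
  have hp : p A = ∑ B ∈ univ.filter (fun B => A ⊆ B),
      (-1:ℝ)^(B.card - A.card) *
        (Q.submatrix (fun a : B => (a:E)) (fun a : B => (a:E))).det :=
    mobius_inv p _ (fun B => (hd B).symm) A
  -- Step 2 : expansion of det (R - D)
  have hRD : R - D = (-Q) + Matrix.diagonal c := by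
    ext i j
    rcases eq_or_ne i j with h | h
    · subst h
      by_cases h2 : i ∈ A <;>
        simp [hRdef, hDdef, hcdef, Matrix.sub_apply, Matrix.add_apply, Matrix.one_apply,
          Matrix.diagonal_apply, h2, Matrix.neg_apply] <;> ring
    · simp [hRdef, hDdef, hcdef, Matrix.sub_apply, Matrix.add_apply, Matrix.one_apply,
        Matrix.diagonal_apply, h, Matrix.neg_apply]
  have hprod : ∀ S : Finset E, (∏ i ∈ Sᶜ, c i) = if A ⊆ S then 1 else 0 := by
    intro S
    by_cases h : A ⊆ S
    · rw [if_pos h]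
      apply Finset.prod_eq_one
      intro i hi
      have hiA : i ∉ A := fun hA => (Finset.mem_compl.mp hi) (h hA)
      simp [hcdef, hiA]
    · rw [if_neg h]
      obtain ⟨i, hiA, hiS⟩ := Finset.not_subset.mp h
      exact Finset.prod_eq_zero (Finset.mem_compl.mpr hiS) (by simp [hcdef, hiA])
  have hneg : ∀ S : Finset E,
      (((-Q).submatrix (fun a : S => (a:E)) (fun a : S => (a:E))).det)
        = (-1:ℝ)^S.card * (Q.submatrix (fun a : S => (a:E)) (fun a : S => (a:E))).det := by
    intro S
    have : ((-Q).submatrix (fun a : S => (a:E)) (fun a : S => (a:E)))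
        = -(Q.submatrix (fun a : S => (a:E)) (fun a : S => (a:E))) := by
      ext i j; simp
    rw [this, Matrix.det_neg, Fintype.card_coe]
  have hexp : (R - D).det = ∑ S ∈ univ.filter (fun S => A ⊆ S),
      (-1:ℝ)^S.card * (Q.submatrix (fun a : S => (a:E)) (fun a : S => (a:E))).det := by
    rw [hRD, det_add_diagonal]
    rw [Finset.sum_filter]
    refine Finset.sum_congr rfl fun S _ => ?_
    rw [hprod, hneg]
    by_cases h : A ⊆ S <;> simp [h]
  -- Step 3 : p A = (-1)^|A| det (R - D)
  have h3 : p A = (-1:ℝ)^A.card * (R - D).det := by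
    rw [hexp, hp, Finset.mul_sum]
    refine Finset.sum_congr rfl fun S hS => ?_
    have hAS : A ⊆ S := by simpa using (Finset.mem_filter.mp hS).2
    have hc : A.card ≤ S.card := Finset.card_le_card hAS
    have hpow : (-1:ℝ)^S.card = (-1:ℝ)^(S.card - A.card) * (-1:ℝ)^A.card := by
      rw [← pow_add, Nat.sub_add_cancel hc]
    rw [hpow]
    set d := (Q.submatrix (fun a : S => (a:E)) (fun a : S => (a:E))).det with hddef
    calc (-1:ℝ)^(S.card - A.card) * d
        = ((-1:ℝ)^A.card * (-1:ℝ)^A.card) * ((-1:ℝ)^(S.card - A.card) * d) := by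
          rw [hsq, one_mul]
      _ = (-1:ℝ)^A.card * ((-1:ℝ)^(S.card - A.card) * (-1:ℝ)^A.card * d) := by ring
  -- Step 4 : factorization
  have hfac : R - D = (1 - D * R⁻¹) * R := by
    rw [sub_mul, one_mul, mul_assoc, Matrix.nonsing_inv_mul R hRu, mul_one]
  have hrows : ∀ i ∉ A, (1 - D * R⁻¹) i = Pi.single i 1 := by
    intro i hi
    funext j
    have hz : (D * R⁻¹) i j = 0 := by
      rw [hDdef, Matrix.diagonal_mul]
      simp [hi]
    show (1 - D * R⁻¹) i j = _
    rw [Matrix.sub_apply, hz, Matrix.one_apply]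
    simp [Pi.single_apply, eq_comm]
  have hJ : Q * R⁻¹ = R⁻¹ - 1 := by
    have h1Q : Q = 1 - R := by rw [hRdef]; abel
    calc Q * R⁻¹ = (1 - R) * R⁻¹ := by rw [← h1Q]
    _ = R⁻¹ - 1 := by rw [sub_mul, one_mul, Matrix.mul_nonsing_inv R hRu]
  have hsubm : (1 - D * R⁻¹).submatrix (fun a : A => (a:E)) (fun a : A => (a:E))
      = -((Q * R⁻¹).submatrix (fun a : A => (a:E)) (fun a : A => (a:E))) := by
    ext i j
    have hDi : (D * R⁻¹) (i:E) (j:E) = R⁻¹ (i:E) (j:E) := by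
      rw [hDdef, Matrix.diagonal_mul]
      simp [i.2]
    simp only [Matrix.submatrix_apply, Matrix.neg_apply, Matrix.sub_apply, hDi, hJ]
    ring
  have hdetM : (1 - D * R⁻¹).det
      = (-1:ℝ)^A.card * ((Q * R⁻¹).submatrix (fun a : A => (a:E)) (fun a : A => (a:E))).det := by
    rw [det_of_single_rows A _ hrows, hsubm, Matrix.det_neg, Fintype.card_coe]
  have h5 : (R - D).det = (-1:ℝ)^A.card
      * ((Q * R⁻¹).submatrix (fun a : A => (a:E)) (fun a : A => (a:E))).det * R.det := by
    rw [hfac, Matrix.det_mul, hdetM]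
  rw [h3, h5]
  set d := ((Q * R⁻¹).submatrix (fun a : A => (a:E)) (fun a : A => (a:E))).det with hddef
  calc (-1:ℝ)^A.card * ((-1:ℝ)^A.card * d * R.det)
      = ((-1:ℝ)^A.card * (-1:ℝ)^A.card) * (d * R.det) := by ring
    _ = R.det * d := by rw [hsq, one_mul, mul_comm]
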